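/- Minimization principle: let f : ℝ^d × ℝ^d → (0,∞) be measurable with ϱ(x) = ∫ f(x,v) dv ∈ (0,∞) and ϱ(x) u(x) = ∫ v f(x,v) dv for a.e. x, and suppose all integrals below are finite. Then ∫ ϱ |u|²/2 + ϱ log ϱ dx ≤ ∫∫ f |v|²/2 + f log f dv dx + (d/2) log(2π) ∫ ϱ dx. -/

import Mathlib

open MeasureTheory Real

local notation "⟪" x ", " y "⟫" => @inner ℝ _ _ x y

lemma gauss_integrable (d : ℕ) (u : EuclideanSpace ℝ (Fin d)) :
    Integrable (fun v : EuclideanSpace ℝ (Fin d) => rexp (-(1/2) * ‖v - u‖ ^ 2)) := by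
  have h : Integrable (fun v : EuclideanSpace ℝ (Fin d) => rexp (-(1/2) * ‖v‖ ^ 2)) := by
    have h0 := (GaussianFourier.integrable_cexp_neg_mul_sq_norm_add (V := EuclideanSpace ℝ (Fin d))
        (b := (1/2 : ℂ)) (by norm_num) 0 0).norm
    convert h0 using 2 with v
    rw [Complex.norm_exp]
    norm_num
    rw [← Complex.ofReal_pow, Complex.ofReal_re]
  exact h.comp_sub_right u

lemma gauss_integral (d : ℕ) (u : EuclideanSpace ℝ (Fin d)) :
    ∫ v : EuclideanSpace ℝ (Fin d), rexp (-(1/2) * ‖v - u‖ ^ 2)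
      = (2 * π) ^ ((d : ℝ) / 2) := by
  rw [integral_sub_right_eq_self (fun v => rexp (-(1/2) * ‖v‖ ^ 2)) u]
  rw [GaussianFourier.integral_rexp_neg_mul_sq_norm (by norm_num : (0:ℝ) < 1/2)]
  rw [finrank_euclideanSpace_fin]
  congr 1
  rw [div_div_eq_mul_div, div_one, mul_comm]

lemma inner_term (d : ℕ) (ff : EuclideanSpace ℝ (Fin d) → ℝ) (R : ℝ)
    (u : EuclideanSpace ℝ (Fin d)) (hRpos : 0 < R)
    (hu : R • u = ∫ v, ff v • v) :
    Integrable (fun v : EuclideanSpace ℝ (Fin d) => ff v * ⟪v, u⟫) ∧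
      (∫ v : EuclideanSpace ℝ (Fin d), ff v * ⟪v, u⟫) = R * ‖u‖ ^ 2 := by
  by_cases hvint : Integrable (fun v : EuclideanSpace ℝ (Fin d) => ff v • v)
  · have hL : ∀ v : EuclideanSpace ℝ (Fin d),
        ff v * ⟪v, u⟫ = (innerSL ℝ u) (ff v • v) := by
      intro v
      rw [innerSL_apply_apply, real_inner_smul_right, real_inner_comm]
    constructor
    · simp_rw [hL]
      exact (innerSL ℝ u).integrable_comp hvint
    · simp_rw [hL]
      rw [ContinuousLinearMap.integral_comp_comm _ hvint, ← hu, innerSL_apply_apply,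
        real_inner_smul_right, real_inner_self_eq_norm_sq]
  · have h0 : R • u = 0 := by rw [hu, integral_undef hvint]
    have hu0 : u = 0 := by
      rcases smul_eq_zero.mp h0 with h | h
      · exact absurd h hRpos.ne'
      · exact h
    subst hu0
    simp

lemma key_pointwise {a b : ℝ} (ha : 0 < a) (hb : 0 < b) :
    a * log b + a - b ≤ a * log a := by
  have h := Real.log_le_sub_one_of_pos (div_pos hb ha)
  rw [Real.log_div hb.ne' ha.ne'] at h
  have h2 := mul_le_mul_of_nonneg_left h ha.le
  rw [mul_sub, mul_sub, mul_div_cancel₀ _ ha.ne'] at h2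
  nlinarith

lemma key (d : ℕ) (ff : EuclideanSpace ℝ (Fin d) → ℝ) (R : ℝ) (u : EuclideanSpace ℝ (Fin d))
    (hffpos : ∀ v, 0 < ff v) (hfint : Integrable ff)
    (hRpos : 0 < R)
    (hR : R = ∫ v, ff v)
    (hu : R • u = ∫ v, ff v • v)
    (hg : Integrable (fun v => ff v * ‖v‖ ^ 2 / 2 + ff v * log (ff v))) :
    R * ‖u‖ ^ 2 / 2 + R * log R ≤
      (∫ v : EuclideanSpace ℝ (Fin d), (ff v * ‖v‖ ^ 2 / 2 + ff v * log (ff v)))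
        + ((d : ℝ) / 2) * log (2 * π) * R := by
  obtain ⟨hIint, hIval⟩ := inner_term d ff R u hRpos hu
  set C : ℝ := log R - ((d : ℝ)/2) * log (2*π) - ‖u‖ ^ 2 / 2 + 1 with hC
  set h : EuclideanSpace ℝ (Fin d) → ℝ := fun v =>
    ff v * C + ff v * ⟪v, u⟫ - R * (2*π) ^ (-(d:ℝ)/2) * rexp (-(1/2) * ‖v - u‖ ^ 2) with hh
  have hint : Integrable h := ((hfint.mul_const C).add hIint).sub
    ((gauss_integrable d u).const_mul _)
  have hhle : ∀ v, h v ≤ ff v * ‖v‖ ^ 2 / 2 + ff v * log (ff v) := by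
    intro v
    have hb : 0 < R * ((2*π) ^ (-(d:ℝ)/2) * rexp (-(1/2) * ‖v - u‖ ^ 2)) := by positivity
    have hkey := key_pointwise (hffpos v) hb
    have hlog : log (R * ((2*π) ^ (-(d:ℝ)/2) * rexp (-(1/2) * ‖v - u‖ ^ 2)))
        = log R + (-(d:ℝ)/2) * log (2*π) + (-(1/2) * ‖v - u‖ ^ 2) := by
      rw [Real.log_mul hRpos.ne' (by positivity),
        Real.log_mul (by positivity) (Real.exp_ne_zero _),
        Real.log_rpow (by positivity), Real.log_exp]
      ring
    have hnorm : ‖v - u‖ ^ 2 = ‖v‖ ^ 2 - 2 * ⟪v, u⟫ + ‖u‖ ^ 2 := by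
      exact norm_sub_sq_real v u
    rw [hlog] at hkey
    simp only [hh, hC]
    nlinarith [hffpos v]
  have hmono := integral_mono hint hg hhle
  have h1 : Integrable (fun v : EuclideanSpace ℝ (Fin d) => ff v * C + ff v * ⟪v, u⟫) :=
    (hfint.mul_const C).add hIint
  have hInt : ∫ v, h v = R * C + R * ‖u‖ ^ 2 - R * (2*π) ^ (-(d:ℝ)/2) * (2*π) ^ ((d:ℝ)/2) := by
    simp only [hh]
    rw [integral_sub h1 ((gauss_integrable d u).const_mul _),
      integral_add (hfint.mul_const C) hIint, MeasureTheory.integral_mul_const, ← hR, hIval,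
      MeasureTheory.integral_const_mul, gauss_integral]
  have hcancel : (2*π : ℝ) ^ (-(d:ℝ)/2) * (2*π) ^ ((d:ℝ)/2) = 1 := by
    rw [← Real.rpow_add (by positivity)]
    have h0 : (-(d:ℝ)/2 + (d:ℝ)/2) = 0 := by ring
    rw [h0, Real.rpow_zero]
  rw [hInt, mul_assoc R, hcancel, mul_one] at hmono
  simp only [hC] at hmono
  nlinarith [hmono]

theorem entropy_minimization_principle (d : ℕ)
    (f : EuclideanSpace ℝ (Fin d) → EuclideanSpace ℝ (Fin d) → ℝ)
    (ρ : EuclideanSpace ℝ (Fin d) → ℝ)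
    (u : EuclideanSpace ℝ (Fin d) → EuclideanSpace ℝ (Fin d))
    (hf : ∀ x v, 0 < f x v)
    (hρ : ∀ x, ρ x = ∫ v : EuclideanSpace ℝ (Fin d), f x v)
    (hρpos : ∀ x, 0 < ρ x)
    (hu : ∀ x, ρ x • u x = ∫ v : EuclideanSpace ℝ (Fin d), f x v • v)
    (hE : Integrable (fun x : EuclideanSpace ℝ (Fin d) =>
      ρ x * ‖u x‖ ^ 2 / 2 + ρ x * log (ρ x)))
    (hF : Integrable (fun p : EuclideanSpace ℝ (Fin d) × EuclideanSpace ℝ (Fin d) =>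
      f p.1 p.2 * ‖p.2‖ ^ 2 / 2 + f p.1 p.2 * log (f p.1 p.2)))
    (hρint : Integrable ρ) :
    (∫ x : EuclideanSpace ℝ (Fin d), (ρ x * ‖u x‖ ^ 2 / 2 + ρ x * log (ρ x))) ≤
      (∫ p : EuclideanSpace ℝ (Fin d) × EuclideanSpace ℝ (Fin d),
        (f p.1 p.2 * ‖p.2‖ ^ 2 / 2 + f p.1 p.2 * log (f p.1 p.2))) +
        ((d : ℝ) / 2) * log (2 * π) * ∫ x : EuclideanSpace ℝ (Fin d), ρ x := by
  have hF' : Integrable (fun p : EuclideanSpace ℝ (Fin d) × EuclideanSpace ℝ (Fin d) =>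
      f p.1 p.2 * ‖p.2‖ ^ 2 / 2 + f p.1 p.2 * log (f p.1 p.2))
      ((volume : Measure (EuclideanSpace ℝ (Fin d))).prod volume) := by
    rwa [← Measure.volume_eq_prod]
  have hffint : ∀ x, Integrable (f x) := by
    intro x
    by_contra hcon
    have := hρ x
    rw [integral_undef hcon] at this
    exact (hρpos x).ne' this
  have haekey : ∀ᵐ x : EuclideanSpace ℝ (Fin d),
      ρ x * ‖u x‖ ^ 2 / 2 + ρ x * log (ρ x) ≤
        (∫ v : EuclideanSpace ℝ (Fin d), (f x v * ‖v‖ ^ 2 / 2 + f x v * log (f x v)))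
          + ((d : ℝ) / 2) * log (2 * π) * ρ x := by
    filter_upwards [hF'.prod_right_ae] with x hgx
    exact key d (f x) (ρ x) (u x) (hf x) (hffint x) (hρpos x) (hρ x) (hu x) hgx
  have hRHSint : Integrable (fun x : EuclideanSpace ℝ (Fin d) =>
      (∫ v : EuclideanSpace ℝ (Fin d), (f x v * ‖v‖ ^ 2 / 2 + f x v * log (f x v)))
        + ((d : ℝ) / 2) * log (2 * π) * ρ x) :=
    hF'.integral_prod_left.add ((hρint.const_mul (((d : ℝ) / 2) * log (2 * π))))
  have hmono := integral_mono_ae hE hRHSint haekey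
  rw [integral_add hF'.integral_prod_left
      ((hρint.const_mul (((d : ℝ) / 2) * log (2 * π)))),
    MeasureTheory.integral_const_mul] at hmono
  calc (∫ x : EuclideanSpace ℝ (Fin d), (ρ x * ‖u x‖ ^ 2 / 2 + ρ x * log (ρ x)))
      ≤ _ := hmono
    _ = _ := by
        rw [← MeasureTheory.integral_prod _ hF', ← Measure.volume_eq_prod]
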